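/- Let b > 0 and define g(x) = (1-x)·ln(1 + bx/(1-x)) for 0 < x < 1. Then g attains its unique maximum at x* = (e^{W((b-1)/e)+1} - 1)/(b + e^{W((b-1)/e)+1} - 1), where W is the Lambert W function (principal branch). -/

import Mathlib

/-- For `b > 0`, `g x = (1-x) * log (1 + b*x/(1-x))` attains its unique maximum
on `(0,1)` at `x* = (e^{W((b-1)/e)+1} - 1)/(b + e^{W((b-1)/e)+1} - 1)`, where `w = W((b-1)/e)`
is the principal Lambert W value, i.e. `w * e^w = (b-1)/e` with `w ≥ -1`. -/
theorem stmt_5 (b : ℝ) (hb : 0 < b) (w : ℝ) (hw : w * Real.exp w = (b - 1) / Real.exp 1)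
    (hw' : -1 ≤ w) :
    (Real.exp (w + 1) - 1) / (b + Real.exp (w + 1) - 1) ∈ Set.Ioo (0:ℝ) 1 ∧
    ∀ x ∈ Set.Ioo (0:ℝ) 1,
      x ≠ (Real.exp (w + 1) - 1) / (b + Real.exp (w + 1) - 1) →
      (1 - x) * Real.log (1 + b * x / (1 - x)) <
        (1 - (Real.exp (w + 1) - 1) / (b + Real.exp (w + 1) - 1)) *
          Real.log (1 + b * ((Real.exp (w + 1) - 1) / (b + Real.exp (w + 1) - 1)) /
            (1 - (Real.exp (w + 1) - 1) / (b + Real.exp (w + 1) - 1))) := by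
  have he : (0:ℝ) < Real.exp 1 := Real.exp_pos 1
  set E := Real.exp (w + 1) with hE
  have hEpos : 0 < E := Real.exp_pos _
  have hwE : w * E = b - 1 := by
    have h1 : E = Real.exp w * Real.exp 1 := by rw [hE, Real.exp_add]
    rw [h1]
    field_simp at hw
    nlinarith [Real.exp_pos w]
  have hw1 : -1 < w := by
    rcases lt_or_eq_of_le hw' with h | h
    · exact h
    · exfalso
      rw [← h] at hwE
      have : E = Real.exp 0 := by rw [hE, ← h]; norm_num
      rw [this, Real.exp_zero] at hwE
      linarith
  have hE1 : 1 < E := by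
    rw [hE]
    calc (1:ℝ) = Real.exp 0 := (Real.exp_zero).symm
    _ < Real.exp (w + 1) := Real.exp_lt_exp.mpr (by linarith)
  have hden : 0 < b + E - 1 := by linarith
  set c := (E - 1) / (b + E - 1) with hc
  have hc0 : 0 < c := div_pos (by linarith) hden
  have hc1 : c < 1 := by rw [hc, div_lt_one hden]; linarith
  have h1c : 1 - c = b / (b + E - 1) := by
    rw [hc]; field_simp
    ring
  have harg : 1 + b * c / (1 - c) = E := by
    rw [h1c, hc]
    field_simp
    ring
  refine ⟨⟨hc0, hc1⟩, ?_⟩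
  intro x hx hxne
  obtain ⟨hx0, hx1⟩ := hx
  have h1x : 0 < 1 - x := by linarith
  set s := 1 + b * x / (1 - x) with hs
  have hs1 : 1 < s := by
    have : 0 < b * x / (1 - x) := div_pos (mul_pos hb hx0) h1x
    rw [hs]; linarith
  have hsne : s ≠ E := by
    intro h
    apply hxne
    have h2 : b * x / (1 - x) = E - 1 := by rw [hs] at h; linarith
    have h3 : b * x = (E - 1) * (1 - x) := by
      field_simp at h2; linarith
    rw [hc]
    field_simp
    nlinarith
  have hlogE : Real.log E = w + 1 := by rw [hE, Real.log_exp]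
  have hlog : Real.log s < s / E + w := by
    have hpos : 0 < s / E := div_pos (by linarith) hEpos
    have hne : s / E ≠ 1 := by
      intro h
      exact hsne (by field_simp at h; linarith)
    have ht := Real.log_lt_sub_one_of_pos hpos hne
    rw [Real.log_div (by linarith) (ne_of_gt hEpos), hlogE] at ht
    linarith
  have hRHS : (1 - c) * Real.log (1 + b * c / (1 - c)) = b / E := by
    rw [harg, hlogE, h1c]
    have hbE : b + E - 1 = E * (w + 1) := by nlinarith
    have hw1' : w + 1 ≠ 0 := by linarith
    rw [hbE]
    field_simp
  rw [hRHS]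
  have key : (1 - x) * Real.log s < (1 - x) * (s / E + w) :=
    mul_lt_mul_of_pos_left hlog h1x
  have heq : (1 - x) * (s / E + w) = b / E := by
    rw [hs]
    field_simp
    linear_combination (1 - x) * hwE
  linarith
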